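/- The probability measures P^{1,N} on ℝ² with densities φ^{1,N} converge weakly to the uniform distribution μ_∞ on the closed unit disc as N → ∞: for every bounded continuous function f : ℝ² → ℝ, ∫_{ℝ²} f(z) φ^{1,N}(z) dz → (1/π) ∫_{|z|≤1} f(z) dz as N → ∞. -/

import Mathlib

open MeasureTheory Real Filter

/-- Truncated exponential series `e_N(t) = ∑_{ℓ=0}^{N-1} tˡ/ℓ!`. -/
noncomputable def eN (N : ℕ) (t : ℝ) : ℝ := ∑ ℓ ∈ Finset.range N, t ^ ℓ / (Nat.factorial ℓ)

/-- One-particle marginal density `φ^{1,N}(z) = π⁻¹ e^{-N|z|²} e_N(N|z|²)` on `ℝ²`. -/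
noncomputable def phi1 (N : ℕ) (z : EuclideanSpace ℝ (Fin 2)) : ℝ :=
  (Real.pi)⁻¹ * Real.exp (-(N : ℝ) * ‖z‖ ^ 2) * eN N ((N : ℝ) * ‖z‖ ^ 2)

lemma eN_nonneg {N : ℕ} {t : ℝ} (ht : 0 ≤ t) : 0 ≤ eN N t :=
  Finset.sum_nonneg fun ℓ _ => by positivity

lemma eN_le_exp {N : ℕ} {t : ℝ} (ht : 0 ≤ t) : eN N t ≤ Real.exp t :=
  Real.sum_le_exp_of_nonneg ht N

/-- `n^n ≤ n! eⁿ`. -/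
lemma pow_le_factorial_mul_exp (n : ℕ) :
    (n : ℝ) ^ n ≤ (n.factorial : ℝ) * Real.exp n := by
  have h1 : (n : ℝ) ^ n / n.factorial ≤ Real.exp n := by
    calc (n : ℝ) ^ n / n.factorial
        ≤ ∑ i ∈ Finset.range (n + 1), (n : ℝ) ^ i / i.factorial := by
          refine Finset.single_le_sum (f := fun i => (n : ℝ) ^ i / i.factorial)
            (fun i _ => by positivity) (Finset.self_mem_range_succ n)
      _ ≤ Real.exp n := Real.sum_le_exp_of_nonneg n.cast_nonneg _
  have h2 : (0 : ℝ) < n.factorial := by exact_mod_cast n.factorial_pos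
  calc (n : ℝ) ^ n = (n : ℝ) ^ n / n.factorial * n.factorial := by field_simp
    _ ≤ Real.exp n * n.factorial := mul_le_mul_of_nonneg_right h1 h2.le
    _ = (n.factorial : ℝ) * Real.exp n := mul_comm _ _

lemma phi1_nonneg (N : ℕ) (z : EuclideanSpace ℝ (Fin 2)) : 0 ≤ phi1 N z := by
  have h : (0 : ℝ) ≤ (N : ℝ) * ‖z‖ ^ 2 := by positivity
  have := eN_nonneg (N := N) h
  unfold phi1
  positivity

lemma exp_sub_eN_le {N : ℕ} (hN : 1 ≤ N) {s : ℝ} (h0 : 0 ≤ s) (h1 : s < 1) :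
    Real.exp ((N : ℝ) * s) - eN N ((N : ℝ) * s)
      ≤ ((N : ℝ) * s) ^ N / N.factorial * (1 - s)⁻¹ := by
  set t : ℝ := (N : ℝ) * s with ht_def
  have ht : 0 ≤ t := by positivity
  have hsum : Summable (fun n : ℕ => t ^ n / n.factorial) := Real.summable_pow_div_factorial t
  have hexp : Real.exp t = ∑' n : ℕ, t ^ n / n.factorial := by
    rw [Real.exp_eq_exp_ℝ, NormedSpace.exp_eq_tsum_div]
  have hsplit : Real.exp t - eN N t = ∑' k : ℕ, t ^ (k + N) / (k + N).factorial := by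
    have h := Summable.sum_add_tsum_nat_add N hsum
    rw [hexp, eN]
    linarith [h]
  rw [hsplit]
  have hterm : ∀ k : ℕ, t ^ (k + N) / (k + N).factorial ≤ t ^ N / N.factorial * s ^ k := by
    intro k
    have hfac : (N.factorial : ℝ) * (N : ℝ) ^ k ≤ ((k + N).factorial : ℝ) := by
      have h1 : N.factorial * N ^ k ≤ N.factorial * (N + 1) ^ k :=
        Nat.mul_le_mul_left _ (Nat.pow_le_pow_left (Nat.le_succ N) k)
      have h2 : N.factorial * (N + 1) ^ k ≤ (N + k).factorial :=
        Nat.factorial_mul_pow_le_factorial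
      have := le_trans h1 h2
      rw [Nat.add_comm N k] at this
      exact_mod_cast this
    have hNpos : (0 : ℝ) < (N : ℝ) := by exact_mod_cast hN
    have hfacpos : (0 : ℝ) < N.factorial * (N : ℝ) ^ k := by positivity
    calc t ^ (k + N) / (k + N).factorial
        ≤ t ^ (k + N) / (N.factorial * (N : ℝ) ^ k) := by
          apply div_le_div_of_nonneg_left (by positivity) hfacpos hfac
      _ = t ^ N / N.factorial * s ^ k := by
          rw [ht_def]
          have hfne : (N.factorial : ℝ) ≠ 0 := by positivity
          field_simp
          ring
  have hsum1 : Summable (fun k : ℕ => t ^ (k + N) / (k + N).factorial) := by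
    exact (summable_nat_add_iff N).mpr hsum
  have hsum2 : Summable (fun k : ℕ => t ^ N / N.factorial * s ^ k) :=
    (summable_geometric_of_lt_one h0 h1).mul_left _
  calc ∑' k : ℕ, t ^ (k + N) / (k + N).factorial
      ≤ ∑' k : ℕ, t ^ N / N.factorial * s ^ k := Summable.tsum_le_tsum hterm hsum1 hsum2
    _ = t ^ N / N.factorial * (1 - s)⁻¹ := by
        rw [tsum_mul_left, tsum_geometric_of_lt_one h0 h1]

lemma r_lt_one {s : ℝ} (h0 : 0 ≤ s) (hne : s ≠ 1) : s * Real.exp (1 - s) < 1 := by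
  have h := Real.add_one_lt_exp (x := s - 1) (by intro h; apply hne; linarith)
  have h2 : s < Real.exp (s - 1) := by linarith
  have h3 : 0 < Real.exp (1 - s) := Real.exp_pos _
  calc s * Real.exp (1 - s) < Real.exp (s - 1) * Real.exp (1 - s) := by
        apply mul_lt_mul_of_pos_right h2 h3
    _ = 1 := by rw [← Real.exp_add]; norm_num

/-- `e^{-Ns}(Ns)^N/N! ≤ (s e^{1-s})^N`. -/
lemma center_term_le {s : ℝ} (h0 : 0 ≤ s) (N : ℕ) :
    Real.exp (-(N : ℝ) * s) * (((N : ℝ) * s) ^ N / N.factorial)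
      ≤ (s * Real.exp (1 - s)) ^ N := by
  have hfac : (0 : ℝ) < N.factorial := by exact_mod_cast N.factorial_pos
  have h1 : ((N : ℝ) * s) ^ N / N.factorial ≤ (s * Real.exp 1) ^ N := by
    rw [div_le_iff₀ hfac, mul_pow, mul_pow]
    calc (N : ℝ) ^ N * s ^ N ≤ (N.factorial : ℝ) * Real.exp N * s ^ N := by
          apply mul_le_mul_of_nonneg_right (pow_le_factorial_mul_exp N) (by positivity)
      _ = s ^ N * Real.exp 1 ^ N * N.factorial := by
          rw [← Real.exp_nat_mul]; ring_nf
  calc Real.exp (-(N : ℝ) * s) * (((N : ℝ) * s) ^ N / N.factorial)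
      ≤ Real.exp (-(N : ℝ) * s) * (s * Real.exp 1) ^ N := by
        apply mul_le_mul_of_nonneg_left h1 (Real.exp_pos _).le
    _ = (s * Real.exp (1 - s)) ^ N := by
        rw [show -(N : ℝ) * s = (N : ℝ) * (-s) by ring, Real.exp_nat_mul, ← mul_pow]
        congr 1
        rw [Real.exp_sub, Real.exp_neg]
        field_simp

lemma chi_tendsto_one {s : ℝ} (h0 : 0 ≤ s) (h1 : s < 1) :
    Tendsto (fun N : ℕ => Real.exp (-(N : ℝ) * s) * eN N ((N : ℝ) * s)) atTop (nhds 1) := by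
  set r : ℝ := s * Real.exp (1 - s) with hr
  have hr0 : 0 ≤ r := by positivity
  have hr1 : r < 1 := r_lt_one h0 (by linarith)
  have hlow : Tendsto (fun N : ℕ => 1 - r ^ N * (1 - s)⁻¹) atTop (nhds 1) := by
    have := (tendsto_pow_atTop_nhds_zero_of_lt_one hr0 hr1).mul_const (1 - s)⁻¹
    have h2 := this.const_sub 1
    simpa using h2
  refine tendsto_of_tendsto_of_tendsto_of_le_of_le' hlow tendsto_const_nhds ?_ ?_
  · filter_upwards [eventually_ge_atTop 1] with N hN
    have ht : (0:ℝ) ≤ (N : ℝ) * s := by positivity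
    have key : Real.exp ((N : ℝ) * s) - eN N ((N : ℝ) * s)
        ≤ ((N : ℝ) * s) ^ N / N.factorial * (1 - s)⁻¹ := exp_sub_eN_le hN h0 h1
    have hc := center_term_le h0 N
    have hinv : (0:ℝ) ≤ (1 - s)⁻¹ := by
      have : (0:ℝ) < 1 - s := by linarith
      positivity
    have hexp : Real.exp (-(N : ℝ) * s) * Real.exp ((N : ℝ) * s) = 1 := by
      rw [← Real.exp_add]; norm_num
    have hchain : 1 - Real.exp (-(N : ℝ) * s) * eN N ((N : ℝ) * s)
        ≤ r ^ N * (1 - s)⁻¹ := by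
      have e1 : 1 - Real.exp (-(N : ℝ) * s) * eN N ((N : ℝ) * s)
          = Real.exp (-(N : ℝ) * s) * (Real.exp ((N : ℝ) * s) - eN N ((N : ℝ) * s)) := by
        rw [mul_sub, hexp]
      rw [e1]
      calc Real.exp (-(N : ℝ) * s) * (Real.exp ((N : ℝ) * s) - eN N ((N : ℝ) * s))
          ≤ Real.exp (-(N : ℝ) * s) * (((N : ℝ) * s) ^ N / N.factorial * (1 - s)⁻¹) := by
            apply mul_le_mul_of_nonneg_left key (Real.exp_pos _).le
        _ = Real.exp (-(N : ℝ) * s) * (((N : ℝ) * s) ^ N / N.factorial) * (1 - s)⁻¹ := by ring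
        _ ≤ r ^ N * (1 - s)⁻¹ := mul_le_mul_of_nonneg_right hc hinv
    linarith
  · filter_upwards with N
    have ht : (0:ℝ) ≤ (N : ℝ) * s := by positivity
    calc Real.exp (-(N : ℝ) * s) * eN N ((N : ℝ) * s)
        ≤ Real.exp (-(N : ℝ) * s) * Real.exp ((N : ℝ) * s) := by
          apply mul_le_mul_of_nonneg_left (eN_le_exp ht) (Real.exp_pos _).le
      _ = 1 := by rw [← Real.exp_add]; norm_num

lemma key_upper {n : ℕ} (hn : 1 ≤ n) {s : ℝ} (hs : 1 ≤ s) :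
    Real.exp (-((n : ℝ) + 1) * s) * eN (n + 1) (((n : ℝ) + 1) * s)
      ≤ Real.exp 1 * ((n : ℝ) + 1) * (s * Real.exp (1 - s)) ^ n * Real.exp (-s) := by
  set t : ℝ := ((n : ℝ) + 1) * s with ht_def
  have hs0 : (0:ℝ) < s := by linarith
  have ht0 : (0:ℝ) < t := by positivity
  have hnt : ((n : ℝ) + 1) ≤ t := by
    nlinarith
  have hfacn : (0:ℝ) < n.factorial := by exact_mod_cast n.factorial_pos
  -- Step a : each term of eN is at most t^n / n!
  have hterm : ∀ ℓ ∈ Finset.range (n + 1), t ^ ℓ / (ℓ.factorial : ℝ) ≤ t ^ n / n.factorial := by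
    intro ℓ hℓ
    have hℓn : ℓ ≤ n := Nat.lt_succ_iff.mp (Finset.mem_range.mp hℓ)
    have hfacℓ : (0:ℝ) < ℓ.factorial := by exact_mod_cast ℓ.factorial_pos
    rw [div_le_div_iff₀ hfacℓ hfacn]
    -- n! ≤ ℓ! * n^(n-ℓ)
    have hd : (n.factorial : ℝ) ≤ (ℓ.factorial : ℝ) * (n : ℝ) ^ (n - ℓ) := by
      have h1 : ℓ.factorial * n.descFactorial (n - ℓ) = n.factorial := by
        have := Nat.factorial_mul_descFactorial (n := n) (k := n - ℓ) (Nat.sub_le n ℓ)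
        rwa [Nat.sub_sub_self hℓn] at this
      have h2 : n.descFactorial (n - ℓ) ≤ n ^ (n - ℓ) := Nat.descFactorial_le_pow n (n - ℓ)
      have : n.factorial ≤ ℓ.factorial * n ^ (n - ℓ) := by
        rw [← h1]; exact Nat.mul_le_mul_left _ h2
      exact_mod_cast this
    have hnt' : (n : ℝ) ≤ t := by linarith [hnt]
    calc t ^ ℓ * n.factorial ≤ t ^ ℓ * ((ℓ.factorial : ℝ) * (n : ℝ) ^ (n - ℓ)) := by
          apply mul_le_mul_of_nonneg_left hd (by positivity)
      _ ≤ t ^ ℓ * ((ℓ.factorial : ℝ) * t ^ (n - ℓ)) := by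
          apply mul_le_mul_of_nonneg_left _ (by positivity)
          apply mul_le_mul_of_nonneg_left _ (by positivity)
          exact pow_le_pow_left₀ (n.cast_nonneg) hnt' _
      _ = t ^ n * ℓ.factorial := by
          rw [show t ^ ℓ * ((ℓ.factorial : ℝ) * t ^ (n - ℓ)) = t ^ ℓ * t ^ (n - ℓ) * ℓ.factorial by ring,
            ← pow_add, Nat.add_sub_cancel' hℓn]
  have hsum : eN (n + 1) t ≤ ((n : ℝ) + 1) * (t ^ n / n.factorial) := by
    calc eN (n + 1) t ≤ ∑ _ℓ ∈ Finset.range (n + 1), t ^ n / n.factorial :=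
          Finset.sum_le_sum hterm
      _ = ((n : ℝ) + 1) * (t ^ n / n.factorial) := by
          rw [Finset.sum_const, Finset.card_range]
          push_cast
          ring
  -- Step b : t^n / n! ≤ (s e)^n * e
  have hb : t ^ n / n.factorial ≤ (s * Real.exp 1) ^ n * Real.exp 1 := by
    have hn0 : (0:ℝ) < n := by exact_mod_cast hn
    have hfact : (n : ℝ) ^ n ≤ (n.factorial : ℝ) * Real.exp n := pow_le_factorial_mul_exp n
    have hquot : ((n : ℝ) + 1) / (n : ℝ) ≤ Real.exp (1 / (n : ℝ)) := by
      have := Real.add_one_le_exp (1 / (n : ℝ))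
      have h2 : ((n : ℝ) + 1) / n = 1 / n + 1 := by field_simp; ring
      rw [h2]; exact this
    have hquotn : (((n : ℝ) + 1) / (n : ℝ)) ^ n ≤ Real.exp 1 := by
      calc (((n : ℝ) + 1) / (n : ℝ)) ^ n ≤ Real.exp (1 / (n : ℝ)) ^ n := by
            apply pow_le_pow_left₀ (by positivity) hquot
        _ = Real.exp ((n : ℝ) * (1 / (n : ℝ))) := by rw [Real.exp_nat_mul]
        _ = Real.exp 1 := by rw [mul_one_div, div_self (ne_of_gt hn0)]
    -- t^n = (n+1)^n s^n ;  n! ≥ n^n / e^n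
    rw [div_le_iff₀ hfacn]
    have hexp_n : (0:ℝ) < Real.exp n := Real.exp_pos _
    -- t^n = ((n+1)/n)^n * n^n * s^n
    have ht_eq : t ^ n = (((n : ℝ) + 1) / (n : ℝ)) ^ n * (n : ℝ) ^ n * s ^ n := by
      rw [ht_def, mul_pow, div_pow, div_mul_cancel₀ _ (pow_ne_zero _ (ne_of_gt hn0))]
    rw [ht_eq]
    calc (((n : ℝ) + 1) / (n : ℝ)) ^ n * (n : ℝ) ^ n * s ^ n
        ≤ Real.exp 1 * ((n.factorial : ℝ) * Real.exp n) * s ^ n := by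
          apply mul_le_mul_of_nonneg_right _ (by positivity)
          apply mul_le_mul hquotn hfact (by positivity) (Real.exp_pos _).le
      _ = (s ^ n * Real.exp n) * Real.exp 1 * n.factorial := by ring
      _ = (s * Real.exp 1) ^ n * Real.exp 1 * n.factorial := by
          rw [mul_pow, ← Real.exp_nat_mul, mul_one]
  -- combine
  have heN0 : 0 ≤ eN (n + 1) t := eN_nonneg ht0.le
  have hexp0 : (0:ℝ) < Real.exp (-((n : ℝ) + 1) * s) := Real.exp_pos _
  calc Real.exp (-((n : ℝ) + 1) * s) * eN (n + 1) t
      ≤ Real.exp (-((n : ℝ) + 1) * s) * (((n : ℝ) + 1) * ((s * Real.exp 1) ^ n * Real.exp 1)) := by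
        apply mul_le_mul_of_nonneg_left _ hexp0.le
        calc eN (n + 1) t ≤ ((n : ℝ) + 1) * (t ^ n / n.factorial) := hsum
          _ ≤ ((n : ℝ) + 1) * ((s * Real.exp 1) ^ n * Real.exp 1) := by
              apply mul_le_mul_of_nonneg_left hb (by positivity)
    _ = Real.exp 1 * ((n : ℝ) + 1) * (s * Real.exp (1 - s)) ^ n * Real.exp (-s) := by
        have e1 : Real.exp (-((n : ℝ) + 1) * s) = Real.exp (-s) ^ n * Real.exp (-s) := by
          rw [← Real.exp_nat_mul, ← Real.exp_add]
          congr 1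
          ring
        rw [e1]
        have e2 : (s * Real.exp 1) ^ n * Real.exp (-s) ^ n = (s * Real.exp (1 - s)) ^ n := by
          rw [← mul_pow]
          congr 1
          rw [Real.exp_sub, Real.exp_neg]
          field_simp
        calc Real.exp (-s) ^ n * Real.exp (-s) * (((n : ℝ) + 1) * ((s * Real.exp 1) ^ n * Real.exp 1))
            = Real.exp 1 * ((n : ℝ) + 1) * ((s * Real.exp 1) ^ n * Real.exp (-s) ^ n) * Real.exp (-s) := by ring
          _ = Real.exp 1 * ((n : ℝ) + 1) * (s * Real.exp (1 - s)) ^ n * Real.exp (-s) := by rw [e2]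

lemma nat_mul_pow_tendsto {r : ℝ} (h0 : 0 ≤ r) (h1 : r < 1) :
    Tendsto (fun N : ℕ => (N : ℝ) * r ^ (N - 1)) atTop (nhds 0) := by
  have hsum : Summable (fun n : ℕ => (n : ℝ) ^ 1 * r ^ n) :=
    summable_pow_mul_geometric_of_norm_lt_one 1 (by rw [Real.norm_eq_abs, abs_of_nonneg h0]; exact h1)
  have hg : Tendsto (fun n : ℕ => (n : ℝ) ^ 1 * r ^ n) atTop (nhds 0) := hsum.tendsto_atTop_zero
  have hp : Tendsto (fun n : ℕ => r ^ n) atTop (nhds 0) :=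
    tendsto_pow_atTop_nhds_zero_of_lt_one h0 h1
  have hh : Tendsto (fun n : ℕ => ((n : ℝ) + 1) * r ^ n) atTop (nhds 0) := by
    have := hg.add hp
    simp only [pow_one, add_zero] at this
    apply this.congr
    intro n; ring
  have h2 : Tendsto (fun N : ℕ => (((N - 1 : ℕ) : ℝ) + 1) * r ^ (N - 1)) atTop (nhds 0) :=
    hh.comp (tendsto_sub_atTop_nat 1)
  apply h2.congr'
  filter_upwards [eventually_ge_atTop 1] with N hN
  congr 1
  have : (N - 1 : ℕ) + 1 = N := Nat.succ_pred_eq_of_pos hN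
  exact_mod_cast congrArg (Nat.cast (R := ℝ)) this

lemma chi_tendsto_zero {s : ℝ} (h1 : 1 < s) :
    Tendsto (fun N : ℕ => Real.exp (-(N : ℝ) * s) * eN N ((N : ℝ) * s)) atTop (nhds 0) := by
  set r : ℝ := s * Real.exp (1 - s) with hr
  have hs0 : (0:ℝ) < s := by linarith
  have hr0 : 0 ≤ r := by positivity
  have hr1 : r < 1 := r_lt_one hs0.le (by linarith)
  have hupper : Tendsto (fun N : ℕ => Real.exp 1 * ((N : ℝ) * r ^ (N - 1)) * Real.exp (-s))
      atTop (nhds 0) := by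
    have := ((nat_mul_pow_tendsto hr0 hr1).const_mul (Real.exp 1)).mul_const (Real.exp (-s))
    simpa using this
  refine tendsto_of_tendsto_of_tendsto_of_le_of_le' tendsto_const_nhds hupper ?_ ?_
  · filter_upwards with N
    have ht : (0:ℝ) ≤ (N : ℝ) * s := by positivity
    exact mul_nonneg (Real.exp_pos _).le (eN_nonneg ht)
  · filter_upwards [eventually_ge_atTop 2] with N hN
    obtain ⟨n, rfl⟩ : ∃ n, N = n + 1 := ⟨N - 1, by omega⟩
    have hn : 1 ≤ n := by omega
    have hcast : ((n + 1 : ℕ) : ℝ) = (n : ℝ) + 1 := by push_cast; ring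
    have hk := key_upper hn h1.le
    calc Real.exp (-((n + 1 : ℕ) : ℝ) * s) * eN (n + 1) (((n + 1 : ℕ) : ℝ) * s)
        = Real.exp (-((n : ℝ) + 1) * s) * eN (n + 1) (((n : ℝ) + 1) * s) := by rw [hcast]
      _ ≤ Real.exp 1 * ((n : ℝ) + 1) * (s * Real.exp (1 - s)) ^ n * Real.exp (-s) := hk
      _ = Real.exp 1 * (((n + 1 : ℕ) : ℝ) * r ^ ((n + 1) - 1)) * Real.exp (-s) := by
          rw [hcast, ← hr]
          simp only [Nat.add_sub_cancel]
          ring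

lemma key_upper' {N : ℕ} (hN : 2 ≤ N) {s : ℝ} (hs : 1 ≤ s) :
    Real.exp (-(N : ℝ) * s) * eN N ((N : ℝ) * s)
      ≤ Real.exp 1 * (N : ℝ) * (s * Real.exp (1 - s)) ^ (N - 1) * Real.exp (-s) := by
  obtain ⟨n, rfl⟩ : ∃ n, N = n + 1 := ⟨N - 1, by omega⟩
  have hn : 1 ≤ n := by omega
  have hc : ((n + 1 : ℕ) : ℝ) = (n : ℝ) + 1 := by push_cast; ring
  simpa [hc, Nat.add_sub_cancel] using key_upper hn hs

lemma phi1_le (N : ℕ) (z : EuclideanSpace ℝ (Fin 2)) :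
    phi1 N z ≤ 10 * Real.exp (-‖z‖ ^ 2) := by
  set s : ℝ := ‖z‖ ^ 2 with hs_def
  have hs0 : 0 ≤ s := by positivity
  have hpi : (3.14 : ℝ) < Real.pi := by linarith [Real.pi_gt_d6]
  have hpinv : (Real.pi)⁻¹ ≤ (3.14 : ℝ)⁻¹ := inv_anti₀ (by norm_num) hpi.le
  have he1 : Real.exp 1 < 2.7182818286 := by linarith [Real.exp_one_lt_d9]
  have he1' : (0:ℝ) < Real.exp 1 := Real.exp_pos _
  have hchi1 : Real.exp (-(N : ℝ) * s) * eN N ((N : ℝ) * s) ≤ 1 := by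
    have ht : (0:ℝ) ≤ (N : ℝ) * s := by positivity
    calc Real.exp (-(N : ℝ) * s) * eN N ((N : ℝ) * s)
        ≤ Real.exp (-(N : ℝ) * s) * Real.exp ((N : ℝ) * s) :=
          mul_le_mul_of_nonneg_left (eN_le_exp ht) (Real.exp_pos _).le
      _ = 1 := by rw [← Real.exp_add]; norm_num
  have hphi_eq : phi1 N z = (Real.pi)⁻¹ * (Real.exp (-(N : ℝ) * s) * eN N ((N : ℝ) * s)) := by
    rw [phi1, hs_def, mul_assoc]
  by_cases hcase : s ≤ 3
  · have h1 : phi1 N z ≤ (Real.pi)⁻¹ := by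
      rw [hphi_eq]
      calc (Real.pi)⁻¹ * (Real.exp (-(N : ℝ) * s) * eN N ((N : ℝ) * s))
          ≤ (Real.pi)⁻¹ * 1 := mul_le_mul_of_nonneg_left hchi1 (by positivity)
        _ = (Real.pi)⁻¹ := mul_one _
    have hexp3' : Real.exp 3 < 21 := by
      have h3 : Real.exp 3 = Real.exp 1 ^ 3 := by
        rw [← Real.exp_nat_mul]; norm_num
      have := pow_lt_pow_left₀ he1 he1'.le (by norm_num : (3:ℕ) ≠ 0)
      rw [h3]
      calc Real.exp 1 ^ 3 < 2.7182818286 ^ 3 := this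
        _ < 21 := by norm_num
    have h2 : (Real.pi)⁻¹ ≤ 10 * Real.exp (-s) := by
      have hexp3 : Real.exp (-(3:ℝ)) ≤ Real.exp (-s) := Real.exp_le_exp.mpr (by linarith)
      have hstep : (Real.pi)⁻¹ ≤ 10 * Real.exp (-(3:ℝ)) := by
        rw [Real.exp_neg]
        calc (Real.pi)⁻¹ ≤ (3.14:ℝ)⁻¹ := hpinv
          _ ≤ 10 * (21:ℝ)⁻¹ := by norm_num
          _ ≤ 10 * (Real.exp 3)⁻¹ := by
              apply mul_le_mul_of_nonneg_left (inv_anti₀ (Real.exp_pos 3) hexp3'.le) (by norm_num)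
      linarith
    exact le_trans h1 h2
  · push_neg at hcase
    have hs1 : (1:ℝ) ≤ s := by linarith
    have hrhalf : s * Real.exp (1 - s) ≤ 1/2 := by
      have he2 : (7:ℝ) ≤ Real.exp 2 := by
        have h2 : Real.exp 2 = Real.exp 1 ^ 2 := by rw [← Real.exp_nat_mul]; norm_num
        nlinarith [Real.exp_one_gt_d9]
      have hlin : Real.exp (s - 3) ≥ 1 + (s - 3) := by linarith [Real.add_one_le_exp (s - 3)]
      have hexp_s1 : Real.exp (s - 1) = Real.exp 2 * Real.exp (s - 3) := by
        rw [← Real.exp_add]; ring_nf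
      have h2s : 2 * s ≤ Real.exp (s - 1) := by
        rw [hexp_s1]; nlinarith [Real.exp_pos (s - 3)]
      have hepos : (0:ℝ) < Real.exp (s - 1) := Real.exp_pos _
      have hinv : Real.exp (1 - s) = (Real.exp (s - 1))⁻¹ := by
        rw [← Real.exp_neg]; ring_nf
      rw [hinv, mul_inv_le_iff₀ hepos]
      linarith
    have hrpos : 0 ≤ s * Real.exp (1 - s) := by positivity
    rw [hphi_eq]
    rcases lt_or_ge N 2 with hN2 | hN2
    · -- N = 0 or 1 : chi ≤ exp(-s) suffices? For N = 0, eN = 0 ; N = 1, eN = 1.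
      interval_cases N
      · simp only [Nat.cast_zero]
        have h0 : eN 0 ((0:ℝ) * s) = 0 := by simp [eN]
        rw [h0]
        have := Real.exp_pos (-s)
        nlinarith
      · simp only [Nat.cast_one]
        have h0 : eN 1 ((1:ℝ) * s) = 1 := by simp [eN]
        rw [h0, mul_one, show (-1:ℝ) * s = -s by ring]
        have hep := Real.exp_pos (-s)
        have : (Real.pi)⁻¹ ≤ 1 := by
          rw [inv_le_one_iff₀]; right; linarith
        nlinarith
    · have hk := key_upper' hN2 hs1
      have hNpow : (N : ℝ) * (s * Real.exp (1 - s)) ^ (N - 1) ≤ 2 := by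
        have hmono : (s * Real.exp (1 - s)) ^ (N - 1) ≤ (1/2 : ℝ) ^ (N - 1) :=
          pow_le_pow_left₀ hrpos hrhalf _
        have h2pow : (0:ℝ) < 2 ^ (N - 1) := by positivity
        have hlt : (N : ℝ) < 2 ^ N := by exact_mod_cast (Nat.lt_two_pow_self (n := N))
        have h2N : (2:ℝ) ^ N = 2 * 2 ^ (N - 1) := by
          rw [← pow_succ']
          congr 1
          omega
        calc (N : ℝ) * (s * Real.exp (1 - s)) ^ (N - 1)
            ≤ (N : ℝ) * (1/2 : ℝ) ^ (N - 1) := by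
              apply mul_le_mul_of_nonneg_left hmono (N.cast_nonneg)
          _ = (N : ℝ) * (2 ^ (N - 1))⁻¹ := by rw [one_div, inv_pow]
          _ ≤ 2 := by
              rw [mul_inv_le_iff₀ h2pow]
              rw [h2N] at hlt
              linarith
      have hchi2 : Real.exp (-(N : ℝ) * s) * eN N ((N : ℝ) * s) ≤ 6 * Real.exp (-s) := by
        have hep := Real.exp_pos (-s)
        calc Real.exp (-(N : ℝ) * s) * eN N ((N : ℝ) * s)
            ≤ Real.exp 1 * (N : ℝ) * (s * Real.exp (1 - s)) ^ (N - 1) * Real.exp (-s) := hk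
          _ = Real.exp 1 * ((N : ℝ) * (s * Real.exp (1 - s)) ^ (N - 1)) * Real.exp (-s) := by ring
          _ ≤ Real.exp 1 * 2 * Real.exp (-s) := by
              apply mul_le_mul_of_nonneg_right _ hep.le
              apply mul_le_mul_of_nonneg_left hNpow he1'.le
          _ ≤ 6 * Real.exp (-s) := by nlinarith
      have hep := Real.exp_pos (-s)
      have hpinv1 : (Real.pi)⁻¹ ≤ 1 := by
        rw [inv_le_one_iff₀]; right; linarith
      have hchipos : 0 ≤ Real.exp (-(N : ℝ) * s) * eN N ((N : ℝ) * s) := by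
        have ht : (0:ℝ) ≤ (N : ℝ) * s := by positivity
        exact mul_nonneg (Real.exp_pos _).le (eN_nonneg ht)
      calc (Real.pi)⁻¹ * (Real.exp (-(N : ℝ) * s) * eN N ((N : ℝ) * s))
          ≤ 1 * (Real.exp (-(N : ℝ) * s) * eN N ((N : ℝ) * s)) :=
            mul_le_mul_of_nonneg_right hpinv1 hchipos
        _ = Real.exp (-(N : ℝ) * s) * eN N ((N : ℝ) * s) := one_mul _
        _ ≤ 6 * Real.exp (-s) := hchi2
        _ ≤ 10 * Real.exp (-s) := by linarith

lemma continuous_phi1 (N : ℕ) : Continuous (phi1 N) := by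
  have h1 : Continuous fun z : EuclideanSpace ℝ (Fin 2) => (N : ℝ) * ‖z‖ ^ 2 :=
    continuous_const.mul (continuous_norm.pow 2)
  have h1' : Continuous fun z : EuclideanSpace ℝ (Fin 2) => -(N : ℝ) * ‖z‖ ^ 2 :=
    continuous_const.mul (continuous_norm.pow 2)
  have h2 : Continuous (eN N) := by
    unfold eN
    exact continuous_finset_sum _ fun ℓ _ => (continuous_pow ℓ).div_const _
  unfold phi1
  exact (continuous_const.mul h1'.rexp).mul (h2.comp h1)

/-- `P^{1,N}` converges weakly to the uniform distribution on the closed unit disc. -/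
theorem stmt2 (f : EuclideanSpace ℝ (Fin 2) → ℝ) (hf : Continuous f)
    (hb : ∃ M : ℝ, ∀ z, |f z| ≤ M) :
    Tendsto (fun N : ℕ => ∫ z, f z * phi1 N z) atTop
      (nhds ((Real.pi)⁻¹ * ∫ z in {z : EuclideanSpace ℝ (Fin 2) | ‖z‖ ≤ 1}, f z)) := by
  obtain ⟨M, hM⟩ := hb
  have hM0 : 0 ≤ M := le_trans (abs_nonneg _) (hM 0)
  set S : Set (EuclideanSpace ℝ (Fin 2)) := {z | ‖z‖ ≤ 1} with hS_def
  have hSmeas : MeasurableSet S :=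
    (isClosed_le continuous_norm continuous_const).measurableSet
  set L : EuclideanSpace ℝ (Fin 2) → ℝ := S.indicator fun z => (Real.pi)⁻¹ * f z with hL_def
  have key : Tendsto (fun N : ℕ => ∫ z, f z * phi1 N z) atTop (nhds (∫ z, L z)) := by
    apply tendsto_integral_of_dominated_convergence
      (bound := fun z => M * (10 * Real.exp (-‖z‖ ^ 2)))
    · intro N
      exact (hf.mul (continuous_phi1 N)).aestronglyMeasurable
    · -- integrable bound
      have hint : Integrable (fun v : EuclideanSpace ℝ (Fin 2) => Real.exp (-‖v‖ ^ 2)) := by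
        have h := (GaussianFourier.integrable_cexp_neg_mul_sq_norm_add
          (V := EuclideanSpace ℝ (Fin 2)) (b := 1) (by norm_num) 0 0).norm
        apply h.congr
        filter_upwards with v
        simp [Complex.norm_exp, ← Complex.ofReal_pow]
      exact (hint.const_mul 10).const_mul M
    · intro N
      filter_upwards with z
      rw [Real.norm_eq_abs, abs_mul, abs_of_nonneg (phi1_nonneg N z)]
      exact mul_le_mul (hM z) (phi1_le N z) (phi1_nonneg N z) hM0
    · -- a.e. convergence
      have hsphere : volume (Metric.sphere (0 : EuclideanSpace ℝ (Fin 2)) 1) = 0 :=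
        Measure.addHaar_sphere volume 0 1
      have hae : ∀ᵐ z : EuclideanSpace ℝ (Fin 2), ‖z‖ ≠ 1 := by
        rw [ae_iff]
        apply measure_mono_null _ hsphere
        intro z hz
        simp only [Set.mem_setOf_eq, not_not] at hz
        simpa [mem_sphere_iff_norm] using hz
      filter_upwards [hae] with z hz
      rcases lt_or_gt_of_ne hz with hlt | hgt
      · -- ‖z‖ < 1
        have h0 : (0:ℝ) ≤ ‖z‖ ^ 2 := by positivity
        have h1 : ‖z‖ ^ 2 < 1 := by nlinarith [norm_nonneg z]
        have hL : L z = (Real.pi)⁻¹ * f z := by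
          rw [hL_def, Set.indicator_of_mem (by simp [hS_def]; linarith)]
        have h := (chi_tendsto_one h0 h1).const_mul (f z * (Real.pi)⁻¹)
        rw [hL, show (Real.pi)⁻¹ * f z = f z * (Real.pi)⁻¹ * 1 by ring]
        apply h.congr
        intro n
        simp only [phi1]
        ring
      · have h1 : 1 < ‖z‖ ^ 2 := by nlinarith [norm_nonneg z]
        have hL : L z = 0 := by
          rw [hL_def, Set.indicator_of_notMem (by simp [hS_def]; linarith)]
        have h := (chi_tendsto_zero h1).const_mul (f z * (Real.pi)⁻¹)
        rw [hL, show (0:ℝ) = f z * (Real.pi)⁻¹ * 0 by ring]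
        apply h.congr
        intro n
        simp only [phi1]
        ring
  have : (∫ z, L z) = (Real.pi)⁻¹ * ∫ z in S, f z := by
    rw [hL_def, integral_indicator hSmeas, integral_const_mul]
  rwa [this] at key
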